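/- Assume every singleton {i}, i ∈ [n], is independent. For each profit value q occurring among the p_i, let P_I^q be an inclusionwise maximal independent subset of the profit class P^q = {i ∈ [n] : p_i = q}, and let I* = ∪_q P_I^q. Then every subset S ⊆ I* is independent, i.e., γ(S) = ∑_{i ∈ S} p_i. -/
import Mathlib


open Finset

/-- A set `S` is independent if `γ S = ∑ i ∈ S, p i`. -/
def AoNIndep {n : ℕ} (γ : Finset (Fin n) → ℕ) (p : Fin n → ℕ) (S : Finset (Fin n)) : Prop :=
  γ S = ∑ i ∈ S, p i

lemma aon_gamma_union_le {n : ℕ} (γ : Finset (Fin n) → ℕ) (p : Fin n → ℕ)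
    (haon : ∀ (i : Fin n) (S : Finset (Fin n)),
      γ (insert i S) = γ S ∨ γ (insert i S) = γ S + p i) :
    ∀ U T : Finset (Fin n), γ (T ∪ U) ≤ γ T + ∑ i ∈ U, p i := by
  intro U
  induction U using Finset.induction with
  | empty => simp
  | @insert i U hiU ih =>
    intro T
    rw [Finset.union_insert, Finset.sum_insert hiU]
    have := ih T
    rcases haon i (T ∪ U) with h | h <;> rw [h] <;> omega

lemma aon_gamma_le_sum {n : ℕ} (γ : Finset (Fin n) → ℕ) (p : Fin n → ℕ)
    (hγ0 : γ ∅ = 0)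
    (haon : ∀ (i : Fin n) (S : Finset (Fin n)),
      γ (insert i S) = γ S ∨ γ (insert i S) = γ S + p i)
    (S : Finset (Fin n)) : γ S ≤ ∑ i ∈ S, p i := by
  have := aon_gamma_union_le γ p haon S ∅
  simpa [hγ0] using this

lemma aon_subset_indep {n : ℕ} (γ : Finset (Fin n) → ℕ) (p : Fin n → ℕ)
    (hγ0 : γ ∅ = 0)
    (hmono : ∀ S T : Finset (Fin n), S ⊆ T → γ S ≤ γ T)
    (haon : ∀ (i : Fin n) (S : Finset (Fin n)),
      γ (insert i S) = γ S ∨ γ (insert i S) = γ S + p i)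
    {T S : Finset (Fin n)} (hTS : T ⊆ S) (hS : AoNIndep γ p S) :
    AoNIndep γ p T := by
  have h1 : γ S ≤ γ T + ∑ i ∈ S \ T, p i := by
    have := aon_gamma_union_le γ p haon (S \ T) T
    rwa [Finset.union_sdiff_of_subset hTS] at this
  have h2 : ∑ i ∈ S \ T, p i + ∑ i ∈ T, p i = ∑ i ∈ S, p i :=
    Finset.sum_sdiff hTS
  have h3 : γ T ≤ ∑ i ∈ T, p i := aon_gamma_le_sum γ p hγ0 haon T
  have h4 : γ S = ∑ i ∈ S, p i := hS
  unfold AoNIndep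
  omega

theorem union_of_maximal_class_bases_indep {n : ℕ} (γ : Finset (Fin n) → ℕ)
    (p : Fin n → ℕ)
    (hp : ∀ i, 1 ≤ p i)
    (hγ0 : γ ∅ = 0)
    (hmono : ∀ S T : Finset (Fin n), S ⊆ T → γ S ≤ γ T)
    (hsub : ∀ S T : Finset (Fin n), S ⊆ T → ∀ i : Fin n,
      γ (insert i S) + γ T ≥ γ (insert i T) + γ S)
    (haon : ∀ (i : Fin n) (S : Finset (Fin n)),
      γ (insert i S) = γ S ∨ γ (insert i S) = γ S + p i)
    (hsingle : ∀ i : Fin n, AoNIndep γ p {i})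
    -- for each profit value `q` occurring among the `p i`, `PI q` is an
    -- inclusionwise maximal independent subset of the profit class
    (PI : ℕ → Finset (Fin n))
    (hPIsub : ∀ q ∈ Finset.univ.image p, PI q ⊆ Finset.univ.filter (fun i => p i = q))
    (hPIindep : ∀ q ∈ Finset.univ.image p, AoNIndep γ p (PI q))
    (hPImax : ∀ q ∈ Finset.univ.image p, ∀ B : Finset (Fin n),
      B ⊆ Finset.univ.filter (fun i => p i = q) → AoNIndep γ p B → PI q ⊆ B → PI q = B)
    (Istar : Finset (Fin n)) (hIstar : Istar = (Finset.univ.image p).biUnion PI) :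
    ∀ S ⊆ Istar, AoNIndep γ p S := by
  intro S
  induction S using Finset.strongInduction with
  | _ S ih =>
    intro hSsub
    by_contra hind
    -- S is nonempty
    have hSne : S.Nonempty := by
      rcases Finset.eq_empty_or_nonempty S with h | h
      · exact absurd (show AoNIndep γ p S by simp [AoNIndep, h, hγ0]) hind
      · exact h
    -- key: for all i ∈ S, γ S + p i = ∑ j ∈ S, p j
    have key : ∀ i ∈ S, γ S + p i = ∑ j ∈ S, p j := by
      intro i hi
      have herase : S.erase i ⊂ S := Finset.erase_ssubset hi
      have hindep : AoNIndep γ p (S.erase i) :=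
        ih _ herase ((Finset.erase_subset i S).trans hSsub)
      have hsum : ∑ j ∈ S.erase i, p j + p i = ∑ j ∈ S, p j :=
        Finset.sum_erase_add S p hi
      have hins : insert i (S.erase i) = S := Finset.insert_erase hi
      rcases haon i (S.erase i) with h | h <;> rw [hins] at h
      · rw [h, hindep]; exact hsum
      · exfalso; apply hind
        unfold AoNIndep
        rw [h, hindep]; exact hsum
    -- all profits in S are equal
    obtain ⟨i0, hi0⟩ := hSne
    have hq : ∀ j ∈ S, p j = p i0 := by
      intro j hj
      have h1 := key j hj
      have h2 := key i0 hi0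
      omega
    -- S ⊆ PI (p i0)
    have hmem : p i0 ∈ Finset.univ.image p := Finset.mem_image_of_mem p (Finset.mem_univ i0)
    have hSPI : S ⊆ PI (p i0) := by
      intro j hj
      have hj' := hSsub hj
      rw [hIstar, Finset.mem_biUnion] at hj'
      obtain ⟨q, hqmem, hjq⟩ := hj'
      have hpj : p j = q := by
        have := hPIsub q hqmem hjq
        simpa using (Finset.mem_filter.mp this).2
      rw [← hq j hj, hpj]
      exact hjq
    exact hind (aon_subset_indep γ p hγ0 hmono haon hSPI (hPIindep _ hmem))
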